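/- Let α, β, ρ, x0, ū be positive real numbers satisfying (β − ρ·x0)·ū − α·x0 > 0, and let t_f > 0. Then F(t_f) = x0·exp(−α·t_f) < x0 and F(0) = exp((−α − ρ·ū)·t_f)·(x0 − β·ū/(α + ρ·ū)) + β·ū/(α + ρ·ū) > x0. -/

import Mathlib

/-- `F τ` is the terminal value `x(t_f)` of the bilinear furnace model started at
`x(0) = x0`, with input `u ≡ 0` on `[0, τ)` and `u ≡ ū` on `[τ, t_f]`. -/
noncomputable def F (α β ρ x0 ubar tf τ : ℝ) : ℝ :=
  Real.exp ((-α - ρ * ubar) * (tf - τ)) *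
      (x0 * Real.exp (-α * τ) - β * ubar / (α + ρ * ubar)) +
    β * ubar / (α + ρ * ubar)

/-- Under assumption (A), at the endpoints of `[0, t_f]` we have
`F(t_f) = x0·exp(−α·t_f) < x0` and
`F(0) = exp((−α − ρ·ū)·t_f)·(x0 − β·ū/(α + ρ·ū)) + β·ū/(α + ρ·ū) > x0`. -/
theorem stmt_8 (α β ρ x0 ubar : ℝ)
    (hα : 0 < α) (hβ : 0 < β) (hρ : 0 < ρ) (hx0 : 0 < x0) (hu : 0 < ubar)
    (hA : (β - ρ * x0) * ubar - α * x0 > 0) (tf : ℝ) (htf : 0 < tf) :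
    (F α β ρ x0 ubar tf tf = x0 * Real.exp (-α * tf) ∧ F α β ρ x0 ubar tf tf < x0) ∧
    (F α β ρ x0 ubar tf 0 =
        Real.exp ((-α - ρ * ubar) * tf) * (x0 - β * ubar / (α + ρ * ubar)) +
          β * ubar / (α + ρ * ubar) ∧
      F α β ρ x0 ubar tf 0 > x0) := by
  have hden : 0 < α + ρ * ubar := by positivity
  set c : ℝ := β * ubar / (α + ρ * ubar) with hc
  have hxc : x0 < c := by
    rw [hc, lt_div_iff₀ hden]
    nlinarith
  constructor
  · constructor
    · simp [F, hc]
    · have h1 : Real.exp (-α * tf) < 1 := by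
        rw [Real.exp_lt_one_iff]
        nlinarith
      simp only [F, sub_self, mul_zero, Real.exp_zero, one_mul, sub_add_cancel]
      nlinarith [Real.exp_pos (-α * tf)]
  · constructor
    · simp [F, hc]
    · have h1 : Real.exp ((-α - ρ * ubar) * tf) < 1 := by
        rw [Real.exp_lt_one_iff]
        nlinarith
      have h0 : 0 < Real.exp ((-α - ρ * ubar) * tf) := Real.exp_pos _
      simp only [F, sub_zero, mul_zero, neg_zero, Real.exp_zero, mul_one, gt_iff_lt, ← hc]
      nlinarith
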